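/- Let M be a finite metric space with n ≥ 2 points and 1 ≤ k ≤ n-1. Then the k-th element of the xst-spectrum equals the minimum over partitions: Σₖ = min{β(D) : D a partition of M into k+1 nonempty parts}, where β(D) = max over pairs of distinct parts of the supremum distance between them, and Σₖ is the k-th smallest edge length of a maximum spanning tree on M. -/

import Mathlib

open scoped Classical

/-- The length of a graph on a finite metric space: the sum of the distances between the
endpoints of its edges. -/
noncomputable def graphLength {M : Type*} [MetricSpace M] [Fintype M] (G : SimpleGraph M) : ℝ :=
  ∑ e ∈ G.edgeSet.toFinite.toFinset,
    Sym2.lift ⟨fun x y => dist x y, fun x y => dist_comm x y⟩ e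

/-- The length of an edge: the distance between its endpoints. -/
noncomputable def edgeLen {M : Type*} [MetricSpace M] (e : Sym2 M) : ℝ :=
  Sym2.lift ⟨fun x y => dist x y, fun x y => dist_comm x y⟩ e

/-- The length of the `i`-th edge in a list of edges (1-indexed), with the convention that the
`0`-th edge has length `0`. -/
noncomputable def edgeLenAt {M : Type*} [MetricSpace M] (E : List (Sym2 M)) : ℕ → ℝ
  | 0 => 0
  | i + 1 => (E.map edgeLen).getD i 0

/-- `P` is a partition of `X` into `m` nonempty parts. -/
def IsPartition {X : Type*} {m : ℕ} (P : Fin m → Set X) : Prop :=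
  (∀ i, (P i).Nonempty) ∧ (Pairwise fun i j => Disjoint (P i) (P j)) ∧
    (⋃ i, P i) = Set.univ

/-- `diam D`: the maximum of the diameters of the parts. -/
noncomputable def diamD {X : Type*} [MetricSpace X] {m : ℕ} (P : Fin m → Set X) : ℝ :=
  ⨆ i, Metric.diam (P i)

/-- `α(D)`: the minimum over pairs of distinct parts of the infimum distance between them. -/
noncomputable def alphaD {X : Type*} [MetricSpace X] {m : ℕ} (P : Fin m → Set X) : ℝ :=
  sInf {r : ℝ | ∃ i j, i ≠ j ∧ ∃ x ∈ P i, ∃ y ∈ P j, r = dist x y}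

/-- `β(D)`: the maximum over pairs of distinct parts of the supremum distance between them. -/
noncomputable def betaD {X : Type*} [MetricSpace X] {m : ℕ} (P : Fin m → Set X) : ℝ :=
  sSup {r : ℝ | ∃ i j, i ≠ j ∧ ∃ x ∈ P i, ∃ y ∈ P j, r = dist x y}

section XstAux

open SimpleGraph

set_option linter.unusedVariables false
set_option linter.unusedSectionVars false


variable {V : Type*}

lemma reach_cases {Γ : SimpleGraph V} {u v x y : V} (p : Γ.Walk x y) :
    (Γ.deleteEdges {s(u,v)}).Reachable x y ∨
      ((Γ.deleteEdges {s(u,v)}).Reachable x u ∧ (Γ.deleteEdges {s(u,v)}).Reachable v y) ∨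
      ((Γ.deleteEdges {s(u,v)}).Reachable x v ∧ (Γ.deleteEdges {s(u,v)}).Reachable u y) := by
  induction p with
  | nil => exact Or.inl (Reachable.refl _)
  | @cons x b y h p ih =>
    by_cases he : s(x, b) = s(u, v)
    · rw [Sym2.eq_iff] at he
      rcases he with ⟨rfl, rfl⟩ | ⟨rfl, rfl⟩
      · rcases ih with h1 | ⟨h1, h2⟩ | ⟨h1, h2⟩
        · exact Or.inr (Or.inl ⟨Reachable.refl _, h1⟩)
        · exact Or.inr (Or.inl ⟨Reachable.refl _, h2⟩)
        · exact Or.inl h2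
      · rcases ih with h1 | ⟨h1, h2⟩ | ⟨h1, h2⟩
        · exact Or.inr (Or.inr ⟨Reachable.refl _, h1⟩)
        · exact Or.inl h2
        · exact Or.inr (Or.inr ⟨Reachable.refl _, h2⟩)
    · have hadj : (Γ.deleteEdges {s(u,v)}).Adj x b :=
        SimpleGraph.deleteEdges_adj.mpr ⟨h, by simpa using he⟩
      rcases ih with h1 | ⟨h1, h2⟩ | ⟨h1, h2⟩
      · exact Or.inl (hadj.reachable.trans h1)
      · exact Or.inr (Or.inl ⟨hadj.reachable.trans h1, h2⟩)
      · exact Or.inr (Or.inr ⟨hadj.reachable.trans h1, h2⟩)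

lemma not_reach_of_path_bridge {Γ : SimpleGraph V} {u v x y : V}
    (hbr : ¬ (Γ.deleteEdges {s(u,v)}).Reachable u v)
    (p : Γ.Walk x y) (hp : p.IsPath) (he : s(u,v) ∈ p.edges) :
    ¬ (Γ.deleteEdges {s(u,v)}).Reachable x y := by
  induction p with
  | nil => simp at he
  | @cons x c y h q ih =>
    rw [Walk.edges_cons, List.mem_cons] at he
    have hq : q.IsPath := hp.of_cons
    rcases he with he | he
    · intro hr
      have hqe : s(u,v) ∉ q.edges := by
        have hnd := hp.edges_nodup
        rw [Walk.edges_cons] at hnd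
        exact he ▸ (List.nodup_cons.mp hnd).1
      have h2 : (Γ.deleteEdges {s(u,v)}).Reachable c y :=
        ⟨q.toDeleteEdges _ (by rintro e hee rfl; exact hqe hee)⟩
      have hxc : (Γ.deleteEdges {s(u,v)}).Reachable x c := hr.trans h2.symm
      rw [Sym2.eq_iff] at he
      rcases he with ⟨rfl, rfl⟩ | ⟨rfl, rfl⟩
      · exact hbr hxc
      · exact hbr hxc.symm
    · intro hr
      refine ih hq he ?_
      have hxc : (Γ.deleteEdges {s(u,v)}).Adj x c := by
        refine SimpleGraph.deleteEdges_adj.mpr ⟨h, ?_⟩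
        simp only [Set.mem_singleton_iff]
        intro hcontra
        have hnd := hp.edges_nodup
        rw [Walk.edges_cons] at hnd
        exact (List.nodup_cons.mp hnd).1 (hcontra ▸ he)
      exact hxc.symm.reachable.trans hr


noncomputable def ccMap {Γ' Γ : SimpleGraph V} (h : Γ' ≤ Γ) :
    Γ'.ConnectedComponent → Γ.ConnectedComponent :=
  SimpleGraph.ConnectedComponent.lift (fun v => Γ.connectedComponentMk v)
    (fun v w p _ => SimpleGraph.ConnectedComponent.sound ⟨p.mapLe h⟩)

lemma ccMap_mk {Γ' Γ : SimpleGraph V} (h : Γ' ≤ Γ) (v : V) :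
    ccMap h (Γ'.connectedComponentMk v) = Γ.connectedComponentMk v := rfl

lemma ccMap_surjective {Γ' Γ : SimpleGraph V} (h : Γ' ≤ Γ) :
    Function.Surjective (ccMap h) := by
  intro c
  obtain ⟨v, rfl⟩ := c.exists_rep
  exact ⟨Γ'.connectedComponentMk v, rfl⟩

lemma card_cc_deleteEdges_le [Finite V] (Γ : SimpleGraph V) (e : Sym2 V) :
    Nat.card (Γ.deleteEdges {e}).ConnectedComponent ≤ Nat.card Γ.ConnectedComponent + 1 := by
  induction e using Sym2.ind with
  | _ u v =>
    set Γ' := Γ.deleteEdges {s(u,v)} with hΓ'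
    have hle : Γ' ≤ Γ := Γ.deleteEdges_le _
    have hinj : Function.Injective
        (fun c : Γ'.ConnectedComponent =>
          if c = Γ'.connectedComponentMk v then (none : Option Γ.ConnectedComponent)
          else some (ccMap hle c)) := by
      intro c d hcd
      by_cases hc : c = Γ'.connectedComponentMk v
      · by_cases hd : d = Γ'.connectedComponentMk v
        · rw [hc, hd]
        · simp [hc, hd] at hcd
      · by_cases hd : d = Γ'.connectedComponentMk v
        · simp [hc, hd] at hcd
        · simp only [if_neg hc, if_neg hd, Option.some_inj] at hcd
          obtain ⟨a, rfl⟩ := c.exists_rep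
          obtain ⟨b, rfl⟩ := d.exists_rep
          have hcd' : Γ.connectedComponentMk a = Γ.connectedComponentMk b := hcd
          obtain ⟨p⟩ := SimpleGraph.ConnectedComponent.exact hcd'
          rcases reach_cases (u := u) (v := v) p with h1 | ⟨h1, h2⟩ | ⟨h1, h2⟩
          · exact SimpleGraph.ConnectedComponent.sound h1
          · exact absurd (SimpleGraph.ConnectedComponent.sound h2.symm) hd
          · exact absurd (SimpleGraph.ConnectedComponent.sound h1) hc
    haveI : Finite Γ.ConnectedComponent := Quot.finite _
    haveI := Fintype.ofFinite Γ.ConnectedComponent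
    calc Nat.card Γ'.ConnectedComponent ≤ Nat.card (Option Γ.ConnectedComponent) :=
          Nat.card_le_card_of_injective _ hinj
      _ = Nat.card Γ.ConnectedComponent + 1 := Finite.card_option

lemma card_cc_deleteEdges_ge [Finite V] (Γ : SimpleGraph V) (e : Sym2 V)
    (hbr : Γ.IsBridge e) (hemem : e ∈ Γ.edgeSet) :
    Nat.card Γ.ConnectedComponent + 1 ≤ Nat.card (Γ.deleteEdges {e}).ConnectedComponent := by
  induction e using Sym2.ind with
  | _ u v =>
    rw [SimpleGraph.isBridge_iff] at hbr
    set Γ' := Γ.deleteEdges {s(u,v)} with hΓ'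
    have hle : Γ' ≤ Γ := Γ.deleteEdges_le _
    have hne : Γ'.connectedComponentMk u ≠ Γ'.connectedComponentMk v := by
      intro hcon
      exact hbr (SimpleGraph.ConnectedComponent.exact hcon)
    by_contra hcard
    push_neg at hcard
    have hle' : Nat.card Γ'.ConnectedComponent ≤ Nat.card Γ.ConnectedComponent := by omega
    have hbij := (ccMap_surjective hle).bijective_of_nat_card_le hle'
    refine hne (hbij.injective ?_)
    show Γ.connectedComponentMk u = Γ.connectedComponentMk v
    exact SimpleGraph.ConnectedComponent.sound ((SimpleGraph.mem_edgeSet Γ).mp hemem).reachable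

lemma card_cc_connected [Finite V] {Γ : SimpleGraph V} (h : Γ.Connected) :
    Nat.card Γ.ConnectedComponent = 1 := by
  rw [Nat.card_eq_one_iff_unique]
  constructor
  · constructor
    intro c d
    obtain ⟨a, rfl⟩ := c.exists_rep
    obtain ⟨b, rfl⟩ := d.exists_rep
    exact SimpleGraph.ConnectedComponent.sound (h.preconnected a b)
  · have := h.nonempty
    exact ⟨Γ.connectedComponentMk (Classical.arbitrary V)⟩

lemma card_cc_delete_list [Finite V] {G : SimpleGraph V} (hGc : G.Connected)
    (hGa : G.IsAcyclic) :
    ∀ L : List (Sym2 V), L.Nodup → (∀ e ∈ L, e ∈ G.edgeSet) →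
      L.length + 1 ≤ Nat.card (G.deleteEdges {e | e ∈ L}).ConnectedComponent := by
  intro L
  induction L with
  | nil =>
    intro _ _
    have : {e : Sym2 V | e ∈ ([] : List (Sym2 V))} = ∅ := by simp
    rw [this, SimpleGraph.deleteEdges_empty, card_cc_connected hGc]
    simp
  | cons a L ih =>
    intro hnd hsub
    rw [List.nodup_cons] at hnd
    have hset : {e : Sym2 V | e ∈ a :: L} = {e | e ∈ L} ∪ {a} := by
      ext e; simp [or_comm]
    have hdel : G.deleteEdges {e | e ∈ a :: L}
        = (G.deleteEdges {e | e ∈ L}).deleteEdges {a} := by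
      rw [SimpleGraph.deleteEdges_deleteEdges, hset]
    have hamem : a ∈ (G.deleteEdges {e | e ∈ L}).edgeSet := by
      rw [SimpleGraph.edgeSet_deleteEdges]
      exact ⟨hsub a (List.mem_cons_self), hnd.1⟩
    have hacyc : (G.deleteEdges {e | e ∈ L}).IsAcyclic := by
      intro w c hc
      exact hGa (c.mapLe (G.deleteEdges_le _)) (hc.mapLe _)
    have hbr : (G.deleteEdges {e | e ∈ L}).IsBridge a :=
      SimpleGraph.isAcyclic_iff_forall_edge_isBridge.mp hacyc hamem
    have := card_cc_deleteEdges_ge _ a hbr hamem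
    have hih := ih hnd.2 (fun e he => hsub e (List.mem_cons_of_mem _ he))
    rw [hdel]
    simp only [List.length_cons]
    omega

lemma card_cc_delete_finset [Finite V] {G : SimpleGraph V} (hGc : G.Connected)
    (F : Finset (Sym2 V)) :
    Nat.card (G.deleteEdges ↑F).ConnectedComponent ≤ F.card + 1 := by
  induction F using Finset.induction_on with
  | empty => simp [card_cc_connected hGc]
  | @insert a F ha ih =>
    have hdel : G.deleteEdges ↑(insert a F)
        = (G.deleteEdges ↑F).deleteEdges {a} := by
      rw [SimpleGraph.deleteEdges_deleteEdges, Finset.coe_insert]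
      congr 1
      ext e; simp [or_comm]
    rw [hdel, Finset.card_insert_of_notMem ha]
    have := card_cc_deleteEdges_le (G.deleteEdges ↑F) a
    omega

variable {M : Type*} [MetricSpace M] [Fintype M]

lemma exchange_aux {G : SimpleGraph M} (hG : G.IsTree)
    (hmax : ∀ T : SimpleGraph M, T.IsTree → graphLength T ≤ graphLength G)
    {u v x y : M} (he : G.Adj u v)
    (hsep : ¬ (G.deleteEdges {s(u,v)}).Reachable x y) :
    dist x y ≤ edgeLen s(u,v) := by
  have hxy : x ≠ y := by rintro rfl; exact hsep (SimpleGraph.Reachable.refl _)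
  by_cases hcase : s(x,y) = s(u,v)
  · rw [Sym2.eq_iff] at hcase
    rcases hcase with ⟨rfl, rfl⟩ | ⟨rfl, rfl⟩
    · exact le_of_eq rfl
    · exact le_of_eq (dist_comm x y)
  · have hxyG : s(x,y) ∉ G.edgeSet := by
      intro hmem
      exact hsep (SimpleGraph.Adj.reachable
        (SimpleGraph.deleteEdges_adj.mpr ⟨(SimpleGraph.mem_edgeSet G).mp hmem, by simpa using hcase⟩))
    set Γ' := G.deleteEdges {s(u,v)} with hΓ'
    set T : SimpleGraph M := Γ' ⊔ SimpleGraph.fromEdgeSet {s(x,y)} with hT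
    have hle : Γ' ≤ T := le_sup_left
    have hTxy : T.Adj x y := Or.inr ((SimpleGraph.fromEdgeSet_adj _).mpr ⟨rfl, hxy⟩)
    have hside : ∀ a : M, Γ'.Reachable a u ∨ Γ'.Reachable a v := by
      intro a
      obtain ⟨p⟩ := hG.isConnected.preconnected a u
      rcases reach_cases (u := u) (v := v) p with h1 | ⟨h1, _⟩ | ⟨h1, _⟩
      · exact Or.inl h1
      · exact Or.inl h1
      · exact Or.inr h1
    have huv : T.Reachable u v := by
      rcases hside x with hx | hx <;> rcases hside y with hy | hy
      · exact absurd (hx.trans hy.symm) hsep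
      · exact ((hx.mono hle).symm.trans (hTxy.reachable.trans (hy.mono hle)))
      · exact (hy.mono hle).symm.trans (hTxy.symm.reachable.trans (hx.mono hle))
      · exact absurd (hx.trans hy.symm) hsep
    have hTreachU : ∀ c : M, T.Reachable c u := by
      intro c
      rcases hside c with h | h
      · exact h.mono hle
      · exact (h.mono hle).trans huv.symm
    have hTconn : T.Connected := by
      have : Nonempty M := ⟨x⟩
      exact ⟨fun a b => (hTreachU a).trans (hTreachU b).symm⟩
    have hTacyc : T.IsAcyclic := by
      intro w c hc
      by_cases hmem : s(x,y) ∈ c.edges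
      · have hreach := (SimpleGraph.adj_and_reachable_delete_edges_iff_exists_cycle.mpr
          ⟨w, c, hc, hmem⟩).2
        apply hsep
        refine hreach.mono ?_
        intro a b hab
        obtain ⟨hab1, hab2⟩ := hab
        rcases hab1 with h | h
        · exact h
        · exact absurd h hab2
      · have hsub : ∀ e ∈ c.edges, e ∈ G.edgeSet := by
          intro e hee
          have hT' := c.edges_subset_edgeSet hee
          rw [hT, SimpleGraph.edgeSet_sup, SimpleGraph.edgeSet_deleteEdges,
            SimpleGraph.edgeSet_fromEdgeSet] at hT'
          rcases hT' with ⟨h1, _⟩ | ⟨h1, _⟩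
          · exact h1
          · rw [Set.mem_singleton_iff] at h1
            exact absurd (h1 ▸ hee) hmem
        exact hG.IsAcyclic (c.transfer G hsub) (hc.transfer hsub)
    have hTtree : T.IsTree := ⟨hTconn, hTacyc⟩
    have hfin : T.edgeSet.toFinite.toFinset
        = insert s(x,y) (G.edgeSet.toFinite.toFinset.erase s(u,v)) := by
      ext e
      simp only [Set.Finite.mem_toFinset, Finset.mem_insert, Finset.mem_erase, hT,
        SimpleGraph.edgeSet_sup, SimpleGraph.edgeSet_deleteEdges,
        SimpleGraph.edgeSet_fromEdgeSet, Set.mem_union, Set.mem_diff,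
        Set.mem_singleton_iff, Set.mem_setOf_eq, hΓ']
      constructor
      · rintro (⟨h1, h2⟩ | ⟨h1, _⟩)
        · exact Or.inr ⟨h2, h1⟩
        · exact Or.inl h1
      · rintro (rfl | ⟨h2, h1⟩)
        · exact Or.inr ⟨rfl, by simpa [Sym2.mk_isDiag_iff] using hxy⟩
        · exact Or.inl ⟨h1, h2⟩
    have hGmem : s(u,v) ∈ G.edgeSet.toFinite.toFinset := by
      rw [Set.Finite.mem_toFinset]; exact he
    have hnotmem : s(x,y) ∉ G.edgeSet.toFinite.toFinset.erase s(u,v) := by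
      intro hmm
      exact hxyG (by
        have := Finset.mem_of_mem_erase hmm
        rwa [Set.Finite.mem_toFinset] at this)
    have hlen : graphLength T = edgeLen s(x,y) + (graphLength G - edgeLen s(u,v)) := by
      unfold graphLength
      rw [hfin, Finset.sum_insert hnotmem, Finset.sum_erase_eq_sub hGmem]
      rfl
    have hcmp := hmax T hTtree
    rw [hlen] at hcmp
    have hd : edgeLen s(x,y) = dist x y := rfl
    linarith

lemma not_reach_of_bridge' {Γ : SimpleGraph M} {x y : M} {e : Sym2 M}
    (hbr : Γ.IsBridge e) (p : Γ.Walk x y) (hp : p.IsPath) (he : e ∈ p.edges) :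
    ¬ (Γ.deleteEdges {e}).Reachable x y := by
  induction e using Sym2.ind with
  | _ u v =>
    rw [SimpleGraph.isBridge_iff] at hbr
    exact not_reach_of_path_bridge hbr p hp he

lemma exchange' {G : SimpleGraph M} (hG : G.IsTree)
    (hmax : ∀ T : SimpleGraph M, T.IsTree → graphLength T ≤ graphLength G)
    {x y : M} {e : Sym2 M} (he : e ∈ G.edgeSet)
    (hsep : ¬ (G.deleteEdges {e}).Reachable x y) :
    dist x y ≤ edgeLen e := by
  induction e using Sym2.ind with
  | _ u v => exact exchange_aux hG hmax ((SimpleGraph.mem_edgeSet G).mp he) hsep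

lemma exists_surj_fin (α : Type*) [Finite α] {m : ℕ} (hm : 0 < m) (h : m ≤ Nat.card α) :
    ∃ f : α → Fin m, Function.Surjective f := by
  have h0 : Nat.card α ≠ 0 := by omega
  obtain ⟨e⟩ : Nonempty (α ≃ Fin (Nat.card α)) := ⟨Nat.equivFinOfCardPos h0⟩
  refine ⟨fun a => ⟨min (e a) (m-1), by omega⟩, fun j => ⟨e.symm ⟨j, by omega⟩, ?_⟩⟩
  apply Fin.ext
  show min ((e (e.symm ⟨(j : ℕ), by omega⟩)) : ℕ) (m-1) = (j : ℕ)
  rw [Equiv.apply_symm_apply]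
  have hj : (j : ℕ) ≤ m - 1 := by omega
  exact Nat.min_eq_left hj

end XstAux

theorem stmt_19 {M : Type*} [MetricSpace M] [Fintype M] (hn : 2 ≤ Fintype.card M)
    (G : SimpleGraph M) (hG : G.IsTree)
    (hmax : ∀ T : SimpleGraph M, T.IsTree → graphLength T ≤ graphLength G)
    (E : List (Sym2 M)) (hE : ∀ e, e ∈ E ↔ e ∈ G.edgeSet) (hnd : E.Nodup)
    (hsorted : (E.map edgeLen).Pairwise (· ≤ ·))
    {k : ℕ} (hk1 : 1 ≤ k) (hk2 : k + 1 ≤ Fintype.card M) :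
    edgeLenAt E k =
      sInf {r : ℝ | ∃ P : Fin (k + 1) → Set M, IsPartition P ∧ r = betaD P} := by

  classical
  obtain ⟨k', rfl⟩ : ∃ k', k = k' + 1 := ⟨k - 1, by omega⟩
  haveI hfinM : Finite M := Finite.of_fintype M
  have hnonempty : Nonempty M := Fintype.card_pos_iff.mp (by omega)
  have hEfin : E.toFinset = G.edgeFinset := by
    ext e
    simp [List.mem_toFinset, SimpleGraph.mem_edgeFinset, hE e]
  have hElen : E.length + 1 = Fintype.card M := by
    have h1 : E.toFinset.card = E.length := List.toFinset_card_of_nodup hnd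
    have h2 := hG.card_edgeFinset
    rw [hEfin] at h1
    omega
  have hk' : k' + 1 ≤ E.length := by omega
  set l := E.map edgeLen with hl
  have hllen : l.length = E.length := List.length_map _
  have hgetD : ∀ i (h : i < E.length), l.getD i 0 = edgeLen (E.get ⟨i, h⟩) := by
    intro i hi
    rw [List.getD_eq_getElem l 0 (by omega : i < l.length)]
    simp [hl]
  have hmono : ∀ i j, i < E.length → j < E.length → i ≤ j →
      l.getD i 0 ≤ l.getD j 0 := by
    intro i j hi hj hij
    rw [List.getD_eq_getElem l 0 (by omega), List.getD_eq_getElem l 0 (by omega)]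
    have := hsorted.rel_get_of_le (a := ⟨i, by omega⟩) (b := ⟨j, by omega⟩)
      (by exact hij)
    simpa using this
  -- Part 1 : lower bound
  have hlb : ∀ r ∈ {r : ℝ | ∃ P : Fin (k' + 1 + 1) → Set M, IsPartition P ∧ r = betaD P},
      l.getD k' 0 ≤ r := by
    rintro r ⟨P, hP, rfl⟩
    obtain ⟨hPne, hPdisj, hPcover⟩ := hP
    have hex : ∀ x : M, ∃ i, x ∈ P i := by
      intro x
      have hx : x ∈ ⋃ i, P i := hPcover ▸ Set.mem_univ x
      simpa using hx
    choose part hpart using hex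
    have huniq : ∀ x i, x ∈ P i → part x = i := by
      intro x i hxi
      by_contra hne
      exact Set.disjoint_left.mp (hPdisj hne) (hpart x) hxi
    set F : Finset (Sym2 M) := G.edgeFinset.filter (fun e => ¬ (Sym2.map part e).IsDiag)
      with hF
    have hconst : ∀ (a b : M), (G.deleteEdges (↑F : Set (Sym2 M))).Adj a b →
        part a = part b := by
      intro a b hab
      rw [SimpleGraph.deleteEdges_adj] at hab
      by_contra hne
      apply hab.2
      rw [hF]
      simp only [Finset.coe_filter, Set.mem_setOf_eq, SimpleGraph.mem_edgeFinset]
      refine ⟨hab.1, ?_⟩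
      rw [Sym2.map_pair_eq, Sym2.mk_isDiag_iff]
      exact hne
    have hwalkconst : ∀ (a b : M) (p : (G.deleteEdges (↑F : Set (Sym2 M))).Walk a b),
        part a = part b := by
      intro a b p
      induction p with
      | nil => rfl
      | cons h p ih => exact (hconst _ _ h).trans ih
    let g : (G.deleteEdges (↑F : Set (Sym2 M))).ConnectedComponent → Fin (k' + 2) :=
      SimpleGraph.ConnectedComponent.lift part (fun a b p _ => hwalkconst a b p)
    have hgsurj : Function.Surjective g := by
      intro j
      obtain ⟨x, hx⟩ := hPne j
      exact ⟨(G.deleteEdges (↑F : Set (Sym2 M))).connectedComponentMk x, huniq x j hx⟩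
    have hcard1 : k' + 2 ≤
        Nat.card ((G.deleteEdges (↑F : Set (Sym2 M))).ConnectedComponent) := by
      have hc := Nat.card_le_card_of_surjective g hgsurj
      simpa [Nat.card_eq_fintype_card] using hc
    have hcard2 := card_cc_delete_finset hG.isConnected F
    have hFcard : k' + 1 ≤ F.card := by omega
    -- each crossing edge has length ≤ betaD P
    have hbdd : BddAbove {r : ℝ | ∃ i j, i ≠ j ∧ ∃ x ∈ P i, ∃ y ∈ P j, r = dist x y} := by
      apply Set.Finite.bddAbove
      apply Set.Finite.subset (Set.Finite.image (fun p : M × M => dist p.1 p.2)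
        Set.finite_univ)
      rintro r ⟨i, j, hij, x, hx, y, hy, rfl⟩
      exact ⟨(x, y), Set.mem_univ _, rfl⟩
    have hβ : ∀ e ∈ F, edgeLen e ≤ betaD P := by
      intro e he
      rw [hF, Finset.mem_filter] at he
      obtain ⟨heG, hecross⟩ := he
      induction e using Sym2.ind with
      | _ u v =>
        rw [Sym2.map_pair_eq, Sym2.mk_isDiag_iff] at hecross
        refine le_csSup hbdd ?_
        exact ⟨part u, part v, hecross, u, hpart u, v, hpart v, rfl⟩
    -- index argument
    by_contra hcon
    push_neg at hcon
    have hFsubE : ∀ e ∈ F, e ∈ E := by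
      intro e he
      rw [hF, Finset.mem_filter, SimpleGraph.mem_edgeFinset] at he
      exact (hE e).mpr he.1
    set T : Finset ℕ := (Finset.range E.length).filter (fun i => l.getD i 0 < l.getD k' 0)
      with hT
    have hmapsto : ∀ e ∈ F, E.idxOf e ∈ T := by
      intro e he
      have heE : e ∈ E := hFsubE e he
      have hlt : E.idxOf e < E.length := List.idxOf_lt_length_iff.mpr heE
      rw [hT, Finset.mem_filter, Finset.mem_range]
      refine ⟨hlt, ?_⟩
      have heq : l.getD (E.idxOf e) 0 = edgeLen e := by
        rw [hgetD _ hlt]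
        congr 1
        exact List.idxOf_get (List.idxOf_lt_length_iff.mpr heE)
      rw [heq]
      exact lt_of_le_of_lt (hβ e he) hcon
    have hcardle : F.card ≤ T.card := by
      apply Finset.card_le_card_of_injOn (fun e => E.idxOf e) hmapsto
      intro a ha b hb hab
      exact (List.idxOf_inj (hFsubE a ha)).mp hab
    have hTsub : T ⊆ Finset.range k' := by
      intro i hi
      rw [hT, Finset.mem_filter, Finset.mem_range] at hi
      rw [Finset.mem_range]
      by_contra hge
      push_neg at hge
      exact absurd hi.2 (not_lt.mpr (hmono k' i (by omega) hi.1 hge))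
    have hTcard := Finset.card_le_card hTsub
    rw [Finset.card_range] at hTcard
    omega
  -- Part 2 : construct a partition achieving the bound
  set R := E.take (k' + 1) with hR
  have hRnd : R.Nodup := hnd.sublist (List.take_sublist _ _)
  have hRsub : ∀ e ∈ R, e ∈ G.edgeSet := fun e he => (hE e).mp (List.take_subset _ _ he)
  have hRlen : R.length = k' + 1 := by rw [hR, List.length_take]; omega
  have hccR := card_cc_delete_list hG.isConnected hG.IsAcyclic R hRnd hRsub
  rw [hRlen] at hccR
  set G' := G.deleteEdges {e | e ∈ R} with hG'
  obtain ⟨f, hfsurj⟩ := exists_surj_fin G'.ConnectedComponent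
    (by omega : 0 < k' + 2) (by omega)
  set P : Fin (k' + 1 + 1) → Set M := fun i => {x | f (G'.connectedComponentMk x) = i}
    with hPdef
  have hPpart : IsPartition P := by
    refine ⟨?_, ?_, ?_⟩
    · intro i
      obtain ⟨c, hc⟩ := hfsurj i
      obtain ⟨x, rfl⟩ := c.exists_rep
      exact ⟨x, hc⟩
    · intro i j hij
      rw [Set.disjoint_left]
      rintro x hxi hxj
      exact hij (hxi ▸ hxj ▸ rfl)
    · ext x
      simp only [Set.mem_iUnion, Set.mem_univ, iff_true]
      exact ⟨_, rfl⟩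
  have hA : ∀ x y : M, ¬ G'.Reachable x y → dist x y ≤ l.getD k' 0 := by
    intro x y hrxy
    obtain ⟨w⟩ := hG.isConnected.preconnected x y
    set q := w.toPath with hq
    have hqmem : ∃ e ∈ q.1.edges, e ∈ R := by
      by_contra hno
      push_neg at hno
      exact hrxy ⟨q.1.toDeleteEdges _ (fun e hee hmem => hno e hee hmem)⟩
    obtain ⟨e, hqe, heR⟩ := hqmem
    have heG : e ∈ G.edgeSet := q.1.edges_subset_edgeSet hqe
    have helen : edgeLen e ≤ l.getD k' 0 := by
      have hiR : R.idxOf e < R.length := List.idxOf_lt_length_iff.mpr heR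
      have hiE : R.idxOf e < E.length := by omega
      have hEi : E.get ⟨R.idxOf e, hiE⟩ = e := by
        have h1 : R.get ⟨R.idxOf e, hiR⟩ = e := List.idxOf_get hiR
        have h2 : R.get ⟨R.idxOf e, hiR⟩ = E.get ⟨R.idxOf e, hiE⟩ := by
          simp only [List.get_eq_getElem]
          exact List.getElem_take
        rw [← h2]
        exact h1
      have h3 : l.getD (R.idxOf e) 0 = edgeLen e := by
        rw [hgetD _ hiE, hEi]
      rw [← h3]
      exact hmono _ _ hiE (by omega) (by omega)
    have hbr : G.IsBridge e := SimpleGraph.isAcyclic_iff_forall_edge_isBridge.mp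
      hG.IsAcyclic heG
    have hsep := not_reach_of_bridge' hbr q.1 q.2 hqe
    exact (exchange' hG hmax heG hsep).trans helen
  have hbeta : betaD P ≤ l.getD k' 0 := by
    apply csSup_le
    · obtain ⟨x, hx⟩ := hPpart.1 0
      obtain ⟨y, hy⟩ := hPpart.1 1
      exact ⟨dist x y, 0, 1, Fin.zero_ne_one, x, hx, y, hy, rfl⟩
    · rintro r ⟨i, j, hij, x, hx, y, hy, rfl⟩
      apply hA
      intro hreach
      apply hij
      rw [hPdef] at hx hy
      simp only [Set.mem_setOf_eq] at hx hy
      rw [← hx, ← hy]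
      congr 1
      exact SimpleGraph.ConnectedComponent.sound hreach
  have hmem : l.getD k' 0 ∈
      {r : ℝ | ∃ P : Fin (k' + 1 + 1) → Set M, IsPartition P ∧ r = betaD P} := by
    have h1 := hlb (betaD P) ⟨P, hPpart, rfl⟩
    exact ⟨P, hPpart, (le_antisymm hbeta h1).symm⟩
  show l.getD k' 0 = _
  refine le_antisymm ?_ ?_
  · exact le_csInf ⟨_, hmem⟩ hlb
  · exact csInf_le ⟨l.getD k' 0, fun r hr => hlb r hr⟩ hmem
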